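/- Let X be a locally finite Helly graph, let g be an automorphism of X, and suppose there exist integers a ≥ 1, L ≥ 1 and a vertex x of X such that d(x, g^{an}·x) = nL for every n ∈ ℕ. Then there exists a bi-infinite L-clique-path (σ_n)_{n ∈ ℤ} in X such that g^a · σ_n = σ_{n+1} for every n ∈ ℤ. -/

import Mathlib

open SimpleGraph Pointwise

/-- A Helly graph: a connected simple graph in which every family of pairwise
intersecting combinatorial balls has a common point. -/
def IsHellyGraph {V : Type*} (Γ : SimpleGraph V) : Prop :=
  Γ.Connected ∧
  ∀ S : Set (V × ℕ),
    (∀ p ∈ S, ∀ q ∈ S, ∃ y : V, Γ.dist p.1 y ≤ p.2 ∧ Γ.dist q.1 y ≤ q.2) →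
    ∃ y : V, ∀ p ∈ S, Γ.dist p.1 y ≤ p.2

/-- Transverse distance `σ ≷ τ = n` between two cliques. -/
def TransDist {V : Type*} (Γ : SimpleGraph V) (σ τ : Set V) (n : ℕ) : Prop :=
  (∀ x ∈ σ, ∀ y ∈ τ, n ≤ Γ.dist x y) ∧
  (∃ x ∈ σ, ∀ y ∈ τ, Γ.dist x y = n) ∧
  (∃ y ∈ τ, ∀ x ∈ σ, Γ.dist x y = n)

/-- `σ 0, …, σ n` is an `L`-clique-path. -/
def IsCliquePath {V : Type*} (Γ : SimpleGraph V) (L n : ℕ) (σ : ℕ → Set V) : Prop :=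
  (∀ i ≤ n, Γ.IsClique (σ i) ∧ (σ i).Nonempty) ∧
  (∀ i ≤ n, ∀ j ≤ n, i ≠ j → Disjoint (σ i) (σ j)) ∧
  (∀ i j : ℕ, i < j → j ≤ n → TransDist Γ (σ i) (σ j) ((j - i) * L)) ∧
  (∀ i : ℕ, 1 ≤ i → i + 1 ≤ n →
    ∀ ρ : Set V, Γ.IsClique ρ → σ i ⊆ ρ →
      TransDist Γ ρ (σ (i - 1)) L → TransDist Γ ρ (σ (i + 1)) L → ρ = σ i)

/-- `σ 0, …, σ n` is a local `L`-clique-path: any three consecutive terms form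
an `L`-clique-path. -/
def IsLocalCliquePath {V : Type*} (Γ : SimpleGraph V) (L n : ℕ) (σ : ℕ → Set V) : Prop :=
  ∀ i : ℕ, i + 2 ≤ n → IsCliquePath Γ L 2 (fun k => σ (i + k))

/-- A bi-infinite `L`-clique-path. -/
def IsCliquePathZ {V : Type*} (Γ : SimpleGraph V) (L : ℕ) (σ : ℤ → Set V) : Prop :=
  (∀ n : ℤ, Γ.IsClique (σ n) ∧ (σ n).Nonempty) ∧
  (∀ n m : ℤ, n ≠ m → Disjoint (σ n) (σ m)) ∧
  (∀ n m : ℤ, n ≠ m → TransDist Γ (σ n) (σ m) ((n - m).natAbs * L)) ∧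
  (∀ n : ℤ, ∀ ρ : Set V, Γ.IsClique ρ → σ n ⊆ ρ →
    TransDist Γ ρ (σ (n - 1)) L → TransDist Γ ρ (σ (n + 1)) L → ρ = σ n)

/-- A bi-infinite local `L`-clique-path. -/
def IsLocalCliquePathZ {V : Type*} (Γ : SimpleGraph V) (L : ℕ) (σ : ℤ → Set V) : Prop :=
  ∀ n : ℤ, IsCliquePath Γ L 2 (fun k : ℕ => σ (n + k))

namespace CPAux

variable {V : Type*} {Γ : SimpleGraph V}

lemma adj_pow_iff (e : Equiv.Perm V)
    (he : ∀ u v, Γ.Adj (e u) (e v) ↔ Γ.Adj u v) :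
    ∀ (n : ℕ) (u v : V), Γ.Adj ((e ^ n) u) ((e ^ n) v) ↔ Γ.Adj u v := by
  intro n
  induction n with
  | zero => intro u v; simp
  | succ n ih =>
    intro u v
    have hs : ∀ w : V, (e ^ (n + 1)) w = e ((e ^ n) w) := by
      intro w; rw [pow_succ']; rfl
    rw [hs u, hs v, he ((e ^ n) u) ((e ^ n) v), ih u v]

lemma adj_inv_iff (e : Equiv.Perm V)
    (he : ∀ u v, Γ.Adj (e u) (e v) ↔ Γ.Adj u v) :
    ∀ u v : V, Γ.Adj (e⁻¹ u) (e⁻¹ v) ↔ Γ.Adj u v := by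
  intro u v
  rw [← he (e⁻¹ u) (e⁻¹ v)]; simp

lemma adj_zpow_iff (e : Equiv.Perm V)
    (he : ∀ u v, Γ.Adj (e u) (e v) ↔ Γ.Adj u v) :
    ∀ (z : ℤ) (u v : V), Γ.Adj ((e ^ z) u) ((e ^ z) v) ↔ Γ.Adj u v := by
  intro z u v
  cases z with
  | ofNat n =>
    rw [Int.ofNat_eq_coe, zpow_natCast]
    exact adj_pow_iff e he n u v
  | negSucc n =>
    rw [zpow_negSucc]
    exact adj_inv_iff _ (adj_pow_iff e he (n + 1)) u v

lemma dist_perm (hconn : Γ.Connected) (e : Equiv.Perm V)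
    (he : ∀ u v, Γ.Adj (e u) (e v) ↔ Γ.Adj u v) (u v : V) :
    Γ.dist (e u) (e v) = Γ.dist u v := by
  have key : ∀ (f : Equiv.Perm V), (∀ a b, Γ.Adj (f a) (f b) ↔ Γ.Adj a b) →
      ∀ a b : V, Γ.dist (f a) (f b) ≤ Γ.dist a b := by
    intro f hf a b
    obtain ⟨p, hp⟩ := hconn.exists_walk_length_eq_dist a b
    have hle := SimpleGraph.dist_le
      (p.map (⟨⇑f, fun {c d} hcd => (hf c d).mpr hcd⟩ : Γ →g Γ))
    rw [SimpleGraph.Walk.length_map, hp] at hle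
    exact hle
  refine le_antisymm (key e he u v) ?_
  have h2 := key e⁻¹ (adj_inv_iff e he) (e u) (e v)
  simpa using h2

lemma isClique_image (e : Equiv.Perm V)
    (he : ∀ u v, Γ.Adj (e u) (e v) ↔ Γ.Adj u v) {A : Set V}
    (hA : Γ.IsClique A) : Γ.IsClique (⇑e '' A) := by
  rw [SimpleGraph.isClique_iff] at hA ⊢
  rintro _ ⟨u, hu, rfl⟩ _ ⟨v, hv, rfl⟩ hne
  exact (he u v).mpr (hA hu hv (fun hc => hne (by rw [hc])))

/-- Goodness: a nonempty clique with pairwise lower bounds and two dominators. -/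
def HGood (Γ : SimpleGraph V) (h : Equiv.Perm V) (L : ℕ) (C : Set V) : Prop :=
  C.Nonempty ∧ Γ.IsClique C ∧
  (∀ y ∈ C, ∀ z ∈ C, ∀ n : ℕ, 1 ≤ n → n * L ≤ Γ.dist y ((h ^ n) z)) ∧
  (∃ p ∈ C, ∀ z ∈ C, ∀ n : ℕ, 1 ≤ n → Γ.dist p ((h ^ n) z) = n * L) ∧
  (∃ q ∈ C, ∀ z ∈ C, ∀ n : ℕ, 1 ≤ n → Γ.dist z ((h ^ n) q) = n * L)

/-- The key step: a clique `ρ ⊇ C₀` admitting gap-one witnesses on both sides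
is itself good, with the witnesses as its dominators. -/
lemma good_of_adversary (hconn : Γ.Connected) (h : Equiv.Perm V)
    (hD : ∀ u v, Γ.dist (h u) (h v) = Γ.dist u v) (L : ℕ)
    {C₀ ρ : Set V} (hC : HGood Γ h L C₀)
    (hρcl : Γ.IsClique ρ) (hsub : C₀ ⊆ ρ)
    (zm zp : V) (hzmC : zm ∈ C₀) (hzpC : zp ∈ C₀)
    (hseedm : ∀ v ∈ ρ, Γ.dist zm (h v) = L)
    (hseedp : ∀ v ∈ ρ, Γ.dist v (h zp) = L) :
    HGood Γ h L ρ := by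
  obtain ⟨hne, hcl₀, hlow, _, _⟩ := hC
  have hps : ∀ (n : ℕ) (u : V), (h ^ (n + 1)) u = h ((h ^ n) u) := by
    intro n u; rw [pow_succ']; rfl
  have hps2 : ∀ (n : ℕ) (u : V), (h ^ (n + 1)) u = (h ^ n) (h u) := by
    intro n u; rw [pow_succ]; rfl
  have hDn : ∀ (n : ℕ) (u v : V), Γ.dist ((h ^ n) u) ((h ^ n) v) = Γ.dist u v := by
    intro n
    induction n with
    | zero => intro u v; simp
    | succ n ih => intro u v; rw [hps n u, hps n v, hD, ih]
  -- future cover by zm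
  have bz : ∀ (n : ℕ), ∀ v ∈ ρ, Γ.dist zm ((h ^ (n + 1)) v) ≤ (n + 1) * L := by
    intro n
    induction n with
    | zero =>
      intro v hv
      rw [pow_one, hseedm v hv]; omega
    | succ n ih =>
      intro v hv
      have t1 : Γ.dist zm ((h ^ (n + 2)) v) ≤
          Γ.dist zm (h zm) + Γ.dist (h zm) ((h ^ (n + 2)) v) := hconn.dist_triangle
      have t2 : Γ.dist (h zm) ((h ^ (n + 2)) v) = Γ.dist zm ((h ^ (n + 1)) v) := by
        rw [hps (n + 1) v, hD]
      rw [t2, hseedm zm (hsub hzmC)] at t1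
      have := ih v hv
      calc Γ.dist zm ((h ^ (n + 2)) v) ≤ L + Γ.dist zm ((h ^ (n + 1)) v) := t1
        _ ≤ L + (n + 1) * L := by omega
        _ = (n + 2) * L := by ring
  -- past cover by zp
  have bz' : ∀ (n : ℕ), ∀ v ∈ ρ, Γ.dist v ((h ^ (n + 1)) zp) ≤ (n + 1) * L := by
    intro n
    induction n with
    | zero =>
      intro v hv
      rw [pow_one, hseedp v hv]; omega
    | succ n ih =>
      intro v hv
      have t1 : Γ.dist v ((h ^ (n + 2)) zp) ≤
          Γ.dist v (h zp) + Γ.dist (h zp) ((h ^ (n + 2)) zp) := hconn.dist_triangle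
      have t2 : Γ.dist (h zp) ((h ^ (n + 2)) zp) = Γ.dist zp ((h ^ (n + 1)) zp) := by
        rw [hps (n + 1) zp, hD]
      rw [t2, hseedp v hv] at t1
      have := ih zp (hsub hzpC)
      calc Γ.dist v ((h ^ (n + 2)) zp) ≤ L + Γ.dist zp ((h ^ (n + 1)) zp) := t1
        _ ≤ L + (n + 1) * L := by omega
        _ = (n + 2) * L := by ring
  -- lower bounds for all pairs of ρ
  have rlow : ∀ n : ℕ, 1 ≤ n → ∀ v ∈ ρ, ∀ v' ∈ ρ, n * L ≤ Γ.dist v ((h ^ n) v') := by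
    intro n hn v hv v' hv'
    have h0 : (n + 2) * L ≤ Γ.dist zm ((h ^ (n + 2)) zp) :=
      hlow zm hzmC zp hzpC (n + 2) (by omega)
    have t1 : Γ.dist zm ((h ^ (n + 2)) zp) ≤
        Γ.dist zm (h v) + Γ.dist (h v) ((h ^ (n + 2)) zp) := hconn.dist_triangle
    have t2 : Γ.dist (h v) ((h ^ (n + 2)) zp) = Γ.dist v ((h ^ (n + 1)) zp) := by
      rw [hps (n + 1) zp, hD]
    have t3 : Γ.dist v ((h ^ (n + 1)) zp) ≤
        Γ.dist v ((h ^ n) v') + Γ.dist ((h ^ n) v') ((h ^ (n + 1)) zp) := hconn.dist_triangle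
    have t4 : Γ.dist ((h ^ n) v') ((h ^ (n + 1)) zp) = Γ.dist v' (h zp) := by
      rw [hps2 n zp, hDn n]
    rw [t2] at t1
    rw [t4, hseedp v' hv'] at t3
    rw [hseedm v hv] at t1
    have e1 : (n + 2) * L = n * L + L + L := by ring
    omega
  refine ⟨hne.mono hsub, hρcl, fun y hy z hz n hn => rlow n hn y hy z hz, ⟨zm, hsub hzmC, ?_⟩, ⟨zp, hsub hzpC, ?_⟩⟩
  · intro z hz n hn
    obtain ⟨m, rfl⟩ : ∃ m, n = m + 1 := ⟨n - 1, by omega⟩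
    exact le_antisymm (bz m z hz) (rlow (m + 1) (by omega) zm (hsub hzmC) z hz)
  · intro z hz n hn
    obtain ⟨m, rfl⟩ : ∃ m, n = m + 1 := ⟨n - 1, by omega⟩
    exact le_antisymm (bz' m z hz) (rlow (m + 1) (by omega) z hz zp (hsub hzpC))


theorem aux_main {V : Type*} (Γ : SimpleGraph V) (hconn : Γ.Connected)
    (hlf : ∀ v : V, (Γ.neighborSet v).Finite)
    (h : Equiv.Perm V) (hadj : ∀ u v, Γ.Adj (h u) (h v) ↔ Γ.Adj u v)
    (L : ℕ) (hL : 1 ≤ L) (x : V)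
    (hax : ∀ n : ℕ, Γ.dist x ((h ^ n) x) = n * L) :
    ∃ σ : ℤ → Set V, IsCliquePathZ Γ L σ ∧ ∀ n : ℤ, ⇑h '' σ n = σ (n + 1) := by
  have hD : ∀ u v, Γ.dist (h u) (h v) = Γ.dist u v := dist_perm hconn h hadj
  have hadjz : ∀ (z : ℤ) (u v : V), Γ.Adj ((h ^ z) u) ((h ^ z) v) ↔ Γ.Adj u v :=
    adj_zpow_iff h hadj
  have hDz : ∀ (z : ℤ) (u v : V), Γ.dist ((h ^ z) u) ((h ^ z) v) = Γ.dist u v :=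
    fun z => dist_perm hconn (h ^ z) (hadjz z)
  -- basic zpow manipulation helpers
  have happ : ∀ (y z : ℤ) (u : V), (h ^ y) ((h ^ z) u) = (h ^ (y + z)) u := by
    intro y z u; rw [zpow_add]; rfl
  have hid : ∀ u : V, (h ^ (0 : ℤ)) u = u := by intro u; rw [zpow_zero]; rfl
  have hone : ∀ u : V, h u = (h ^ (1 : ℤ)) u := by intro u; rw [zpow_one]
  have hnatz : ∀ (n : ℕ) (u : V), (h ^ (n : ℤ)) u = (h ^ n) u := by
    intro n u; rw [zpow_natCast]
  have hmove : ∀ (w : ℤ) (u v : V), Γ.dist ((h ^ w) u) v = Γ.dist u ((h ^ (-w)) v) := by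
    intro w u v
    have hthis := hDz (-w) ((h ^ w) u) v
    rw [happ (-w) w u, show -w + w = (0 : ℤ) from by ring, hid] at hthis
    exact hthis.symm
  have hgen : ∀ (s t : ℤ) (u v : V),
      Γ.dist ((h ^ s) u) ((h ^ t) v) = Γ.dist u ((h ^ (t - s)) v) := by
    intro s t u v
    rw [hmove s u ((h ^ t) v), happ (-s) t v, show -s + t = t - s from by ring]
  have himg : ∀ (y z : ℤ) (A : Set V),
      ⇑(h ^ y) '' (⇑(h ^ z) '' A) = ⇑(h ^ (y + z)) '' A := by
    intro y z A
    rw [Set.image_image]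
    exact Set.image_congr' (fun u => happ y z u)
  have himg0 : ∀ A : Set V, ⇑(h ^ (0 : ℤ)) '' A = A := by
    intro A
    rw [zpow_zero]
    simp
  -- a maximal good clique containing x
  have hgood_x : HGood Γ h L {x} := by
    refine ⟨⟨x, rfl⟩, ?_, ?_, ⟨x, rfl, ?_⟩, ⟨x, rfl, ?_⟩⟩
    · rw [SimpleGraph.isClique_iff]; exact Set.pairwise_singleton x Γ.Adj
    · rintro y rfl z rfl n hn; exact (hax n).ge
    · rintro z rfl n hn; exact hax n
    · rintro z rfl n hn; exact hax n
  set S : Set (Set V) := {C | x ∈ C ∧ HGood Γ h L C} with hS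
  have hSfin : S.Finite := by
    apply Set.Finite.subset ((hlf x).insert x).finite_subsets
    rintro C ⟨hxC, _, hcl, _⟩ y hy
    by_cases hyx : y = x
    · subst hyx; exact Set.mem_insert _ _
    · exact Set.mem_insert_of_mem _ (((SimpleGraph.isClique_iff Γ).mp hcl hy hxC hyx).symm)
  obtain ⟨C₀, hC₀S, hmax⟩ :=
    Set.Finite.exists_maximalFor id S hSfin ⟨{x}, rfl, hgood_x⟩
  obtain ⟨hxC₀, hG₀⟩ := hC₀S
  obtain ⟨hne₀, hcl₀, hlow₀, ⟨p₀, hp₀C, hp₀⟩, ⟨q₀, hq₀C, hq₀⟩⟩ := id hG₀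
  have hshift : ∀ (k : ℤ) (n : ℕ) (u v : V),
      Γ.dist ((h ^ k) u) ((h ^ (k + (n : ℤ))) v) = Γ.dist u ((h ^ n) v) := by
    intro k n u v
    rw [hgen k (k + (n : ℤ)) u v, show k + (n : ℤ) - k = (n : ℤ) from by ring, hnatz]
  -- transverse distances between all translates
  have htd : ∀ k m : ℤ, k ≠ m →
      TransDist Γ (⇑(h ^ k) '' C₀) (⇑(h ^ m) '' C₀) ((k - m).natAbs * L) := by
    intro k m hkm
    rcases lt_or_gt_of_ne hkm with hlt | hgt
    · obtain ⟨n, hn1, hn2⟩ : ∃ n : ℕ, 1 ≤ n ∧ m = k + (n : ℤ) :=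
        ⟨(m - k).toNat, by omega, by omega⟩
      have habs : (k - m).natAbs = n := by omega
      rw [habs, hn2]
      refine ⟨?_, ⟨(h ^ k) p₀, ⟨p₀, hp₀C, rfl⟩, ?_⟩,
        ⟨(h ^ (k + (n : ℤ))) q₀, ⟨q₀, hq₀C, rfl⟩, ?_⟩⟩
      · rintro _ ⟨y, hy, rfl⟩ _ ⟨z, hz, rfl⟩
        rw [hshift k n y z]; exact hlow₀ y hy z hz n hn1
      · rintro _ ⟨z, hz, rfl⟩
        rw [hshift k n p₀ z]; exact hp₀ z hz n hn1
      · rintro _ ⟨y, hy, rfl⟩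
        rw [hshift k n y q₀]; exact hq₀ y hy n hn1
    · obtain ⟨n, hn1, hn2⟩ : ∃ n : ℕ, 1 ≤ n ∧ k = m + (n : ℤ) :=
        ⟨(k - m).toNat, by omega, by omega⟩
      have habs : (k - m).natAbs = n := by omega
      have hflip : ∀ u v : V,
          Γ.dist ((h ^ (m + (n : ℤ))) u) ((h ^ m) v) = Γ.dist v ((h ^ n) u) := by
        intro u v
        rw [SimpleGraph.dist_comm, hshift m n v u]
      rw [habs, hn2]
      refine ⟨?_, ⟨(h ^ (m + (n : ℤ))) q₀, ⟨q₀, hq₀C, rfl⟩, ?_⟩,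
        ⟨(h ^ m) p₀, ⟨p₀, hp₀C, rfl⟩, ?_⟩⟩
      · rintro _ ⟨y, hy, rfl⟩ _ ⟨z, hz, rfl⟩
        rw [hflip y z]; exact hlow₀ z hz y hy n hn1
      · rintro _ ⟨z, hz, rfl⟩
        rw [hflip q₀ z]; exact hq₀ z hz n hn1
      · rintro _ ⟨y, hy, rfl⟩
        rw [hflip y p₀]; exact hp₀ y hy n hn1
  refine ⟨fun k => ⇑(h ^ k) '' C₀, ⟨?_, ?_, ?_, ?_⟩, ?_⟩
  · -- cliques and nonempty
    intro k
    exact ⟨isClique_image _ (hadjz k) hcl₀, hne₀.image _⟩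
  · -- disjointness
    intro k m hkm
    rw [Set.disjoint_left]
    intro t htk htm
    have h1 := (htd k m hkm).1 t htk t htm
    rw [SimpleGraph.dist_self] at h1
    have h0 : (k - m).natAbs * L = 0 := by omega
    rcases Nat.mul_eq_zero.mp h0 with h2 | h2
    · omega
    · omega
  · -- transverse distances
    intro k m hkm
    exact htd k m hkm
  · -- maximality
    intro k ρ hρcl hsubk hm1 hp1
    obtain ⟨y1, hy1mem, hzp0⟩ := hp1.2.2
    obtain ⟨zp, hzpC, rfl⟩ := hy1mem
    obtain ⟨y2, hy2mem, hzm0⟩ := hm1.2.2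
    obtain ⟨zm, hzmC, rfl⟩ := hy2mem
    -- hzp0 : ∀ v ∈ ρ, dist v ((h^(k+1)) zp) = L
    -- hzm0 : ∀ v ∈ ρ, dist v ((h^(k-1)) zm) = L
    have hsub' : C₀ ⊆ ⇑(h ^ (-k : ℤ)) '' ρ := by
      have h2 := Set.image_mono (f := ⇑(h ^ (-k : ℤ))) hsubk
      rwa [himg (-k) k C₀, show -k + k = (0 : ℤ) from by ring, himg0] at h2
    have hρ'cl : Γ.IsClique (⇑(h ^ (-k : ℤ)) '' ρ) := isClique_image _ (hadjz (-k)) hρcl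
    have hseedp' : ∀ v ∈ ⇑(h ^ (-k : ℤ)) '' ρ, Γ.dist v (h zp) = L := by
      rintro _ ⟨v, hv, rfl⟩
      rw [hone zp, hgen (-k) 1 v zp, show (1 : ℤ) - -k = k + 1 from by ring]
      exact hzp0 v hv
    have hseedm' : ∀ v ∈ ⇑(h ^ (-k : ℤ)) '' ρ, Γ.dist zm (h v) = L := by
      rintro _ ⟨v, hv, rfl⟩
      rw [hone ((h ^ (-k : ℤ)) v), happ 1 (-k) v,
        show (1 : ℤ) + -k = -(k - 1) from by ring]
      rw [SimpleGraph.dist_comm, hmove (-(k - 1)) v zm, neg_neg]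
      exact hzm0 v hv
    have hGρ' := good_of_adversary hconn h hD L hG₀ hρ'cl hsub' zm zp hzmC hzpC
      hseedm' hseedp'
    have heq := le_antisymm (a := id C₀) hsub' (hmax ⟨hsub' hxC₀, hGρ'⟩ hsub')
    simp only [id_eq] at heq
    show ρ = ⇑(h ^ k) '' C₀
    rw [heq, himg k (-k) ρ, show k + -k = (0 : ℤ) from by ring, himg0]
  · -- equivariance
    intro n
    show ⇑h '' (⇑(h ^ n) '' C₀) = ⇑(h ^ (n + 1)) '' C₀
    rw [Set.image_image]
    exact Set.image_congr' (fun u => by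
      rw [hone ((h ^ n) u), happ 1 n u, show (1 : ℤ) + n = n + 1 from by ring])

end CPAux

/-- A hyperbolic automorphism (one translating some vertex with linear speed
along powers of `g ^ a`) of a locally finite Helly graph admits an invariant
bi-infinite `L`-clique-path. -/
theorem hyperbolic_invariant_clique_path {V : Type*} (Γ : SimpleGraph V)
    (hΓ : IsHellyGraph Γ) (hlf : ∀ v : V, (Γ.neighborSet v).Finite)
    (g : Equiv.Perm V) (hg : ∀ u v : V, Γ.Adj (g u) (g v) ↔ Γ.Adj u v)
    (a L : ℕ) (ha : 1 ≤ a) (hL : 1 ≤ L) (x : V)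
    (hx : ∀ n : ℕ, Γ.dist x ((g ^ (a * n)) x) = n * L) :
    ∃ σ : ℤ → Set V, IsCliquePathZ Γ L σ ∧
      ∀ n : ℤ, (g ^ a) '' σ n = σ (n + 1) := by
  have hadj : ∀ u v : V, Γ.Adj ((g ^ a) u) ((g ^ a) v) ↔ Γ.Adj u v :=
    CPAux.adj_pow_iff g hg a
  have hax : ∀ n : ℕ, Γ.dist x (((g ^ a) ^ n) x) = n * L := by
    intro n
    have h1 := hx n
    rwa [pow_mul] at h1
  exact CPAux.aux_main Γ hΓ.1 hlf (g ^ a) hadj L hL x hax
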